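/- Fix α > 0. Let c(n, p) = C(n, p)/2^p with C(n,p) = 2·∑_{j=0}^{n-1} binom(p-1, j). Then as n → ∞ with p = ⌊α n⌋, c(n, p) converges to 1 if α < 2, to 0 if α > 2, and to 1/2 if α = 2 (along even αn). -/

import Mathlib

open Filter

/-- Cover's count of linearly realizable dichotomies of `p` points in general
position in `ℝ^n`: `C(n,p) = 2 * ∑_{j=0}^{n-1} binom(p-1, j)`. -/
def coverC (n p : ℕ) : ℕ := 2 * ∑ j ∈ Finset.range n, Nat.choose (p - 1) j

/-- The fraction of linearly realizable dichotomies. -/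
noncomputable def coverFrac (n p : ℕ) : ℝ := (coverC n p : ℝ) / 2 ^ p

open Finset

lemma sum_choose_split (m n : ℕ) :
    (∑ j ∈ range n, Nat.choose m j) + ∑ j ∈ Ico n (m+1), Nat.choose m j = 2^m := by
  rcases le_or_gt n (m+1) with h | h
  · rw [Finset.sum_range_add_sum_Ico _ h, Nat.sum_range_choose]
  · rw [Finset.Ico_eq_empty (by omega), Finset.sum_empty, add_zero,
      ← Finset.sum_range_add_sum_Ico _ (le_of_lt h), Nat.sum_range_choose]
    have : ∑ j ∈ Ico (m+1) n, Nat.choose m j = 0 := by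
      apply Finset.sum_eq_zero
      intro j hj
      exact Nat.choose_eq_zero_of_lt (by have := (Finset.mem_Ico.mp hj).1; omega)
    omega

lemma sum_choose_pow (m N : ℕ) (h : m + 1 ≤ N) (s : ℝ) :
    ∑ j ∈ range N, (Nat.choose m j : ℝ) * s^j = (1+s)^m := by
  rw [← Finset.sum_subset (Finset.range_subset_range.2 h)
    (fun j _ hj => by
      rw [Nat.choose_eq_zero_of_lt (by simpa using (Finset.mem_range.not.mp hj : ¬ j < m+1)),
        Nat.cast_zero, zero_mul])]
  rw [show (1+s:ℝ) = s + 1 from add_comm 1 s, add_pow]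
  exact Finset.sum_congr rfl fun k _ => by ring

lemma cher_up (m n : ℕ) (t : ℝ) (ht : 1 ≤ t) :
    (∑ j ∈ Ico n (m+1), (Nat.choose m j : ℝ)) * t^n ≤ (1+t)^m := by
  have ht0 : (0:ℝ) ≤ t := le_trans zero_le_one ht
  rw [Finset.sum_mul, ← sum_choose_pow m (n+m+1) (by omega) t]
  calc ∑ j ∈ Ico n (m+1), (Nat.choose m j : ℝ) * t^n
      ≤ ∑ j ∈ Ico n (m+1), (Nat.choose m j : ℝ) * t^j := by
        apply Finset.sum_le_sum
        intro j hj
        exact mul_le_mul_of_nonneg_left (pow_le_pow_right₀ ht (Finset.mem_Ico.mp hj).1)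
          (Nat.cast_nonneg _)
    _ ≤ ∑ j ∈ range (n+m+1), (Nat.choose m j : ℝ) * t^j := by
        apply Finset.sum_le_sum_of_subset_of_nonneg
        · intro j hj
          simp only [Finset.mem_Ico] at hj
          exact Finset.mem_range.2 (by omega)
        · intro j _ _
          positivity

lemma cher_lo (m n : ℕ) (s : ℝ) (hs : 0 < s) (hs1 : s ≤ 1) :
    (∑ j ∈ range n, (Nat.choose m j : ℝ)) * s^(n-1) ≤ (1+s)^m := by
  rw [Finset.sum_mul, ← sum_choose_pow m (n+m+1) (by omega) s]
  calc ∑ j ∈ range n, (Nat.choose m j : ℝ) * s^(n-1)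
      ≤ ∑ j ∈ range n, (Nat.choose m j : ℝ) * s^j := by
        apply Finset.sum_le_sum
        intro j hj
        exact mul_le_mul_of_nonneg_left
          (pow_le_pow_of_le_one hs.le hs1 (by have := Finset.mem_range.mp hj; omega))
          (Nat.cast_nonneg _)
    _ ≤ ∑ j ∈ range (n+m+1), (Nat.choose m j : ℝ) * s^j := by
        apply Finset.sum_le_sum_of_subset_of_nonneg
        · exact Finset.range_subset_range.2 (by omega)
        · intro j _ _
          positivity

lemma coverFrac_eq_div (n p : ℕ) (hp : 1 ≤ p) :
    coverFrac n p = (∑ j ∈ range n, (Nat.choose (p-1) j : ℝ)) / 2^(p-1) := by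
  unfold coverFrac coverC
  obtain ⟨m, rfl⟩ : ∃ m, p = m + 1 := ⟨p - 1, by omega⟩
  simp only [Nat.add_sub_cancel]
  push_cast
  rw [pow_succ']
  field_simp

lemma coverFrac_eq_sub (n p : ℕ) (hp : 1 ≤ p) :
    coverFrac n p = 1 - (∑ j ∈ Ico n p, (Nat.choose (p-1) j : ℝ)) / 2^(p-1) := by
  rw [coverFrac_eq_div n p hp]
  obtain ⟨m, rfl⟩ : ∃ m, p = m + 1 := ⟨p - 1, by omega⟩
  simp only [Nat.add_sub_cancel]
  have h := sum_choose_split m n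
  have h2 : (∑ j ∈ range n, (Nat.choose m j : ℝ)) + ∑ j ∈ Ico n (m+1), (Nat.choose m j : ℝ)
      = 2^m := by exact_mod_cast congrArg (Nat.cast : ℕ → ℝ) h
  have hpow : (0:ℝ) < 2^m := by positivity
  field_simp
  linarith

lemma exp_le_quad (x : ℝ) (h0 : 0 ≤ x) (h1 : x ≤ 1/2) : Real.exp x ≤ 1 + x + 2*x^2 := by
  have h2 : 1 - x ≤ Real.exp (-x) := by have := Real.add_one_le_exp (-x); linarith
  have h3 : (0:ℝ) < 1 - x := by linarith
  have h4 : Real.exp x ≤ 1/(1-x) := by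
    rw [le_div_iff₀ h3]
    calc Real.exp x * (1-x) ≤ Real.exp x * Real.exp (-x) :=
          mul_le_mul_of_nonneg_left h2 (Real.exp_pos x).le
      _ = 1 := by rw [← Real.exp_add]; simp
  refine h4.trans ?_
  rw [div_le_iff₀ h3]
  nlinarith

lemma exp_neg_le_quad (y : ℝ) (h0 : 0 ≤ y) : Real.exp (-y) ≤ 1 - y + y^2 := by
  have h2 : 1 + y ≤ Real.exp y := by have := Real.add_one_le_exp y; linarith
  have h3 : (0:ℝ) < 1 + y := by linarith
  have h4 : Real.exp (-y) ≤ 1/(1+y) := by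
    rw [le_div_iff₀ h3]
    calc Real.exp (-y) * (1+y) ≤ Real.exp (-y) * Real.exp y :=
          mul_le_mul_of_nonneg_left h2 (Real.exp_pos _).le
      _ = 1 := by rw [← Real.exp_add]; simp
  refine h4.trans ?_
  rw [div_le_iff₀ h3]
  nlinarith

theorem coverFrac_thermodynamic_limit (α : ℝ) (hα : 0 < α) :
    (α < 2 → Tendsto (fun n : ℕ => coverFrac n ⌊α * n⌋₊) atTop (nhds 1)) ∧
    (2 < α → Tendsto (fun n : ℕ => coverFrac n ⌊α * n⌋₊) atTop (nhds 0)) ∧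
    Tendsto (fun n : ℕ => coverFrac n (2 * n)) atTop (nhds (1 / 2)) := by
  have hev1 : ∀ᶠ n : ℕ in atTop, (1:ℝ) ≤ α * n := by
    have : Tendsto (fun n : ℕ => α * n) atTop atTop :=
      Tendsto.const_mul_atTop hα tendsto_natCast_atTop_atTop
    exact this.eventually_ge_atTop 1
  refine ⟨?_, ?_, ?_⟩
  · -- α < 2
    intro h2
    set u : ℝ := (2 - α)/16 with hu_def
    have hu : 0 < u := by simp only [hu_def]; linarith
    have hu8 : u < 1/8 := by simp only [hu_def]; linarith
    set t : ℝ := 1 + 2*u with ht_def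
    have ht1 : (1:ℝ) ≤ t := by simp only [ht_def]; linarith
    have ht0 : (0:ℝ) < t := by linarith
    set q : ℝ := (1+u)^α / t with hq_def
    have hq0 : 0 ≤ q := by
      apply div_nonneg _ ht0.le
      exact Real.rpow_nonneg (by linarith) _
    have hkey : (1+u)^α < t := by
      have s1 : (1+u:ℝ)^α ≤ (Real.exp u)^α :=
        Real.rpow_le_rpow (by linarith) (by linarith [Real.add_one_le_exp u]) hα.le
      have s2 : (Real.exp u)^α = Real.exp (u * α) := (Real.exp_mul u α).symm
      have s3 : Real.exp (u*α) ≤ 1 + u*α + 2*(u*α)^2 :=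
        exp_le_quad _ (by positivity) (by nlinarith)
      have s4 : 1 + u*α + 2*(u*α)^2 < t := by
        simp only [ht_def]
        have h16u : u*α = 2*u - 16*(u*u) := by rw [hu_def]; ring
        have hα4 : α^2 < 4 := by nlinarith
        nlinarith [h16u, hα4, mul_pos hu hu]
      calc (1+u:ℝ)^α ≤ Real.exp (u*α) := by rw [← s2]; exact s1
        _ < t := lt_of_le_of_lt s3 s4
    have hq1 : q < 1 := by
      rw [hq_def, div_lt_one ht0]
      exact hkey
    have hqlim : Tendsto (fun n : ℕ => q^n) atTop (nhds 0) :=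
      tendsto_pow_atTop_nhds_zero_of_lt_one hq0 hq1
    have hlow : Tendsto (fun n : ℕ => 1 - q^n) atTop (nhds 1) := by
      have := hqlim.const_sub 1
      simpa using this
    apply tendsto_of_tendsto_of_tendsto_of_le_of_le' hlow tendsto_const_nhds
    · -- eventually 1 - q^n ≤ coverFrac
      filter_upwards [hev1] with n hn
      set p := ⌊α * n⌋₊ with hp_def
      have hp1 : 1 ≤ p := Nat.le_floor (by exact_mod_cast hn)
      set m := p - 1 with hm_def
      have hmp : m + 1 = p := by omega
      have hpm : (m:ℝ) ≤ α * n := by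
        have h1 : (p:ℝ) ≤ α * n := Nat.floor_le (by positivity)
        have : (m:ℝ) ≤ p := by exact_mod_cast Nat.sub_le p 1
        linarith
      rw [coverFrac_eq_sub n p hp1]
      set T : ℝ := ∑ j ∈ Ico n p, (Nat.choose (p-1) j : ℝ) with hT_def
      have hbound : T / 2^m ≤ q^n := by
        have hch : T * t^n ≤ (1+t)^m := by
          rw [hT_def, ← hmp]
          exact cher_up m n t ht1
        have he : (1+t)^m = 2^m * (1+u)^m := by
          rw [← mul_pow]
          congr 1
          simp only [ht_def]; ring
        have htn : (0:ℝ) < t^n := by positivity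
        have h2m : (0:ℝ) < 2^m := by positivity
        rw [div_le_iff₀ h2m]
        rw [← le_div_iff₀ htn] at hch
        refine hch.trans ?_
        rw [he, mul_div_assoc, mul_comm]
        apply mul_le_mul_of_nonneg_right _ h2m.le
        rw [div_le_iff₀ htn]
        have r1 : ((1+u:ℝ))^(m:ℕ) = (1+u:ℝ)^((m:ℕ):ℝ) := (Real.rpow_natCast _ _).symm
        have r2 : (1+u:ℝ)^((m:ℕ):ℝ) ≤ (1+u:ℝ)^(α * n) :=
          Real.rpow_le_rpow_of_exponent_le (by linarith) hpm
        have r3 : (1+u:ℝ)^(α*n) ≤ (1+u:ℝ)^((α:ℝ)*(n:ℕ)) := le_refl _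
        have r4 : (1+u:ℝ)^(α*(n:ℕ):ℝ) = ((1+u:ℝ)^α)^(n:ℕ) := by
          rw [Real.rpow_mul (by linarith), Real.rpow_natCast]
        have r5 : q^n * t^n = ((1+u)^α)^n := by
          rw [hq_def, div_pow, div_mul_cancel₀]
          positivity
        rw [r5, r1]
        calc (1+u:ℝ)^((m:ℕ):ℝ) ≤ (1+u:ℝ)^(α*n) := r2
          _ = ((1+u:ℝ)^α)^(n:ℕ) := r4
      linarith
    · -- eventually coverFrac ≤ 1
      filter_upwards [hev1] with n hn
      have hp1 : 1 ≤ ⌊α * n⌋₊ := Nat.le_floor (by exact_mod_cast hn)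
      rw [coverFrac_eq_sub n _ hp1]
      have : (0:ℝ) ≤ (∑ j ∈ Ico n ⌊α*n⌋₊, (Nat.choose (⌊α*n⌋₊-1) j : ℝ)) / 2^(⌊α*n⌋₊-1) := by
        positivity
      linarith
  · -- α > 2
    intro h2
    set u : ℝ := (α - 2)/(2*α^2) with hu_def
    have hα2 : (0:ℝ) < α^2 := by positivity
    have hu : 0 < u := by
      rw [hu_def]
      apply div_pos (by linarith) (by positivity)
    have hu2 : u < 1/2 := by
      rw [hu_def, div_lt_iff₀ (by positivity)]
      nlinarith [sq_nonneg (α - 1/2)]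
    set s : ℝ := 1 - 2*u with hs_def
    have hs0 : (0:ℝ) < s := by simp only [hs_def]; linarith
    have hs1 : s ≤ 1 := by simp only [hs_def]; linarith
    set q : ℝ := (1-u)^α / s with hq_def
    have h1u : (0:ℝ) < 1 - u := by linarith
    have hq0 : 0 ≤ q := div_nonneg (Real.rpow_nonneg h1u.le _) hs0.le
    have hkey : (1-u)^α < s := by
      have s1 : (1-u:ℝ)^α ≤ (Real.exp (-u))^α :=
        Real.rpow_le_rpow h1u.le (by linarith [Real.add_one_le_exp (-u)]) hα.le
      have s2 : (Real.exp (-u))^α = Real.exp (-u * α) := (Real.exp_mul (-u) α).symm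
      have s3 : Real.exp (-(u*α)) ≤ 1 - u*α + (u*α)^2 := exp_neg_le_quad _ (by positivity)
      have s4 : 1 - u*α + (u*α)^2 < s := by
        simp only [hs_def]
        have h16 : 2*α^2*u = α - 2 := by
          rw [hu_def]; field_simp
        nlinarith
      calc (1-u:ℝ)^α ≤ Real.exp (-(u*α)) := by
            rw [show -(u*α) = -u*α by ring, ← s2]; exact s1
        _ < s := lt_of_le_of_lt s3 s4
    have hq1 : q < 1 := by rw [hq_def, div_lt_one hs0]; exact hkey
    have hqC : Tendsto (fun n : ℕ => (s/(1-u)^(2:ℝ)) * q^n) atTop (nhds 0) := by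
      have := (tendsto_pow_atTop_nhds_zero_of_lt_one hq0 hq1).const_mul (s/(1-u)^(2:ℝ))
      simpa using this
    apply tendsto_of_tendsto_of_tendsto_of_le_of_le' tendsto_const_nhds hqC
    · -- eventually 0 ≤ coverFrac
      filter_upwards with n
      unfold coverFrac
      positivity
    · -- eventually coverFrac ≤ C * q^n
      filter_upwards [hev1, eventually_ge_atTop 1] with n hn hn1
      set p := ⌊α * n⌋₊ with hp_def
      have hp1 : 1 ≤ p := Nat.le_floor (by exact_mod_cast hn)
      set m := p - 1 with hm_def
      have hmge : α * n - 2 ≤ (m:ℝ) := by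
        have h1 : α * n < (p:ℝ) + 1 := Nat.lt_floor_add_one _
        have : (m:ℝ) = (p:ℝ) - 1 := by
          have : (p:ℕ) = m + 1 := by omega
          rw [this]; push_cast; ring
        linarith
      rw [coverFrac_eq_div n p hp1]
      have hch : (∑ j ∈ range n, (Nat.choose (p-1) j : ℝ)) * s^(n-1) ≤ (1+s)^m :=
        cher_lo m n s hs0 hs1
      have he : (1+s)^m = 2^m * (1-u)^m := by
        rw [← mul_pow]; congr 1; simp only [hs_def]; ring
      have h2m : (0:ℝ) < 2^m := by positivity
      have hsn : (0:ℝ) < s^(n-1) := by positivity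
      have hstep : (∑ j ∈ range n, (Nat.choose (p-1) j : ℝ)) / 2^m ≤ (1-u)^m / s^(n-1) := by
        rw [div_le_div_iff₀ h2m hsn]
        calc (∑ j ∈ range n, (Nat.choose (p-1) j : ℝ)) * s^(n-1) ≤ (1+s)^m := hch
          _ = (1-u)^m * 2^m := by rw [he]; ring
      have hfinal : (1-u:ℝ)^m / s^(n-1) ≤ (s/(1-u)^(2:ℝ)) * q^n := by
        have r1 : ((1-u:ℝ))^(m:ℕ) = (1-u:ℝ)^((m:ℕ):ℝ) := (Real.rpow_natCast _ _).symm
        have r2 : (1-u:ℝ)^((m:ℕ):ℝ) ≤ (1-u:ℝ)^(α*n - 2) :=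
          Real.rpow_le_rpow_of_exponent_ge h1u (by linarith) hmge
        have r3 : (1-u:ℝ)^(α*n-2) = (1-u)^(α*(n:ℕ):ℝ) / (1-u)^(2:ℝ) := by
          rw [← Real.rpow_sub h1u]
        have r4 : (1-u:ℝ)^(α*(n:ℕ):ℝ) = ((1-u:ℝ)^α)^(n:ℕ) := by
          rw [Real.rpow_mul h1u.le, Real.rpow_natCast]
        have r5 : (s:ℝ)^(n-1) = s^n / s := by
          rw [eq_div_iff (ne_of_gt hs0), ← pow_succ]
          congr 1; omega
        have hq_pow : q^n = ((1-u:ℝ)^α)^n / s^n := by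
          rw [hq_def, div_pow]
        have h1u2 : (0:ℝ) < (1-u)^(2:ℝ) := Real.rpow_pos_of_pos h1u 2
        have main : (1-u:ℝ)^m ≤ ((1-u:ℝ)^α)^n / (1-u)^(2:ℝ) := by
          rw [← r4, ← r3, r1]; exact r2
        calc (1-u:ℝ)^m / s^(n-1) = (1-u)^m * s / s^n := by
              rw [r5, div_div_eq_mul_div]
          _ ≤ (((1-u:ℝ)^α)^n / (1-u)^(2:ℝ)) * s / s^n := by
              gcongr
          _ = (s/(1-u)^(2:ℝ)) * q^n := by
              rw [hq_pow]
              field_simp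
      calc (∑ j ∈ range n, (Nat.choose (p-1) j : ℝ)) / 2^(p-1)
          ≤ (1-u)^m / s^(n-1) := hstep
        _ ≤ (s/(1-u)^(2:ℝ)) * q^n := hfinal
  · -- α = 2 branch: coverFrac n (2n) = 1/2 for n ≥ 1
    have hconst : ∀ n : ℕ, 1 ≤ n → coverFrac n (2*n) = 1/2 := by
      intro n hn
      unfold coverFrac coverC
      obtain ⟨k, rfl⟩ : ∃ k, n = k + 1 := ⟨n - 1, by omega⟩
      have h1 : 2 * (k+1) - 1 = 2*k + 1 := by omega
      rw [h1]
      have h2 := Nat.sum_range_choose_halfway k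
      rw [h2]
      have h3 : ((2 * 4^k : ℕ) : ℝ) / 2^(2*(k+1)) = 1/2 := by
        have : ((2 * 4^k : ℕ) : ℝ) = 2 * 4^k := by push_cast; ring
        rw [this, show (2:ℝ)^(2*(k+1)) = 4^k * 4 by rw [show 2*(k+1) = 2*k+2 by omega, pow_add, pow_mul]; norm_num]
        have h4 : (4:ℝ)^k ≠ 0 := by positivity
        field_simp
        ring
      exact h3
    apply Tendsto.congr' _ (tendsto_const_nhds (x := (1/2:ℝ)))
    filter_upwards [eventually_ge_atTop 1] with n hn
    exact (hconst n hn).symm
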